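/- The impedance matrix D with entries d_{k,j} = −(1/Z_k)(1/Z_j)/S for j ≠ k and d_{k,k} = (1/Z_k)(S − 1/Z_k)/S, where S = 1/Z_l + ∑_m 1/Z_m, is positive definite (hence invertible). -/

import Mathlib

open Matrix

theorem impedance_matrix_posdef (n : ℕ) (Z : Fin n → ℝ) (Zl : ℝ)
    (hZ : ∀ k, 0 < Z k) (hZl : 0 < Zl)
    (S : ℝ) (hS : S = 1 / Zl + ∑ m, 1 / Z m)
    (D : Matrix (Fin n) (Fin n) ℝ)
    (hD : ∀ k j, D k j =
      if j = k then (1 / Z k) * (S - 1 / Z k) / S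
      else -(1 / Z k) * (1 / Z j) / S) :
    D.PosDef ∧ IsUnit D.det := by
  set a : Fin n → ℝ := fun k => 1 / Z k with ha
  have ha_pos : ∀ k, 0 < a k := fun k => one_div_pos.mpr (hZ k)
  have hsum_nonneg : (0:ℝ) ≤ ∑ m, a m :=
    Finset.sum_nonneg fun m _ => (ha_pos m).le
  have hS_pos : 0 < S := by
    have h1 : 0 < 1 / Zl := by positivity
    rw [hS]; linarith
  have hSne : S ≠ 0 := ne_of_gt hS_pos
  have hS_gt : ∑ m, a m < S := by
    rw [hS]; have : 0 < 1 / Zl := by positivity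
    linarith
  -- entrywise decomposition
  have hD' : ∀ k j, D k j = (if j = k then a k else 0) - a k * a j / S := by
    intro k j
    rw [hD]
    by_cases h : j = k
    · subst h; simp only [if_pos rfl]
      rw [mul_sub, sub_div, mul_div_assoc, div_self hSne, mul_one]
      simp [ha]
    · simp only [if_neg h]; ring
  have key : ∀ x : Fin n → ℝ,
      x ⬝ᵥ D *ᵥ x = (∑ k, a k * x k ^ 2) - (∑ k, a k * x k) ^ 2 / S := by
    intro x
    have inner : ∀ k, (D *ᵥ x) k = a k * x k - a k / S * ∑ j, a j * x j := by
      intro k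
      simp only [Matrix.mulVec, dotProduct, hD', sub_mul,
        Finset.sum_sub_distrib, ite_mul, zero_mul, Finset.sum_ite_eq',
        Finset.mem_univ, if_pos, Finset.mul_sum]
      congr 1
      apply Finset.sum_congr rfl
      intro j _
      ring
    simp only [dotProduct, inner]
    rw [Finset.sum_congr rfl (fun k _ => by ring :
      ∀ k ∈ Finset.univ, x k * (a k * x k - a k / S * ∑ j, a j * x j)
        = a k * x k ^ 2 - (a k * x k) * (∑ j, a j * x j) / S),
      Finset.sum_sub_distrib]
    congr 1
    rw [← Finset.sum_div, ← Finset.sum_mul, sq]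
  have hpos : ∀ x : Fin n → ℝ, x ≠ 0 → 0 < x ⬝ᵥ D *ᵥ x := by
    intro x hx
    rw [key]
    have hCS : (∑ k, a k * x k) ^ 2 ≤ (∑ k, a k) * ∑ k, a k * x k ^ 2 :=
      Finset.sum_sq_le_sum_mul_sum_of_sq_eq_mul Finset.univ
        (fun k _ => (ha_pos k).le)
        (fun k _ => mul_nonneg (ha_pos k).le (sq_nonneg _))
        (fun k _ => by ring)
    have hq_pos : 0 < ∑ k, a k * x k ^ 2 := by
      obtain ⟨k, hk⟩ := Function.ne_iff.mp hx
      apply Finset.sum_pos' (fun i _ => mul_nonneg (ha_pos i).le (sq_nonneg _))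
      exact ⟨k, Finset.mem_univ k,
        mul_pos (ha_pos k) (by have hk' : x k ≠ 0 := hk; positivity)⟩
    have hlt : (∑ k, a k * x k) ^ 2 < S * ∑ k, a k * x k ^ 2 :=
      lt_of_le_of_lt hCS (by
        exact mul_lt_mul_of_pos_right hS_gt hq_pos)
    rw [sub_pos, div_lt_iff₀ hS_pos]
    linarith [hlt]
  have hHerm : D.IsHermitian := by
    ext k j
    rw [Matrix.conjTranspose_apply, hD' k j, hD' j k, star_trivial]
    by_cases h : j = k
    · subst h; rfl
    · rw [if_neg h, if_neg (Ne.symm h)]; ring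
  have hPD : D.PosDef := Matrix.posDef_iff_dotProduct_mulVec.mpr ⟨hHerm, fun x hx => by
    simpa using hpos x hx⟩
  exact ⟨hPD, isUnit_iff_ne_zero.mpr hPD.det_pos.ne'⟩
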